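/- Let a₁, b₁, a₂, b₂ : ℝ → ℂ be continuous on [0,1]. For i = 1,2 define hᵢ : ℝ → ℂ on [0,4] by hᵢ(t) = aᵢ(t) for t ∈ [0,1], hᵢ(t) = bᵢ(t−1) for t ∈ (1,2], hᵢ(t) = −aᵢ(3−t) for t ∈ (2,3], hᵢ(t) = −bᵢ(4−t) for t ∈ (3,4]. Then (a) ∫_{0 ≤ s ≤ t ≤ 4} h₂(s)h₁(t) ds dt = − ∫_{0 ≤ s ≤ t ≤ 4} h₁(s)h₂(t) ds dt; and (b) ∫_{0 ≤ s ≤ t ≤ 4} h₁(s)h₁(t) ds dt = 0. -/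

import Mathlib

open MeasureTheory intervalIntegral Set Topology

/-- integrability of a function agreeing on `Ioc p q` with a continuous one. -/
private lemma CommAux.pieceInt {f c : ℝ → ℂ} {p q : ℝ} (hpq : p ≤ q)
    (hc : ContinuousOn c (Icc p q)) (hfc : ∀ t ∈ Ioc p q, f t = c t) :
    IntervalIntegrable f volume p q := by
  rw [intervalIntegrable_iff_integrableOn_Ioc_of_le hpq]
  exact ((hc.integrableOn_Icc).mono_set Ioc_subset_Icc_self).congr_fun
    (fun t ht => (hfc t ht).symm) measurableSet_Ioc

private lemma CommAux.pieceEq {f c : ℝ → ℂ} {p q : ℝ} (hpq : p ≤ q)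
    (hfc : ∀ t ∈ Ioc p q, f t = c t) :
    ∫ t in p..q, f t = ∫ t in p..q, c t :=
  integral_congr_ae (Filter.Eventually.of_forall
    (fun t ht => hfc t (by rwa [uIoc_of_le hpq] at ht)))

private lemma CommAux.contAt {c f : ℝ → ℂ} {p q t : ℝ} (ht : t ∈ Ioo p q)
    (hc : ContinuousOn c (Icc p q)) (hfc : ∀ s ∈ Ioc p q, f s = c s) :
    ContinuousAt f t := by
  have h1 : ContinuousAt c t := hc.continuousAt (Icc_mem_nhds ht.1 ht.2)
  apply h1.congr
  filter_upwards [Ioo_mem_nhds ht.1 ht.2] with s hs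
  exact (hfc s (Ioo_subset_Ioc_self hs)).symm

/-- one-piece FTC for the product of primitives. -/
private lemma CommAux.pieceFTC (f g : ℝ → ℂ) {p q : ℝ} (hpq : p ≤ q)
    (hsub : Icc p q ⊆ Icc 0 4)
    (hf : IntervalIntegrable f volume 0 4) (hg : IntervalIntegrable g volume 0 4)
    (hfc : ∀ t ∈ Ioo p q, ContinuousAt f t) (hgc : ∀ t ∈ Ioo p q, ContinuousAt g t) :
    ∫ t in p..q, (f t * (∫ s in (0:ℝ)..t, g s) + (∫ s in (0:ℝ)..t, f s) * g t)
      = (∫ s in (0:ℝ)..q, f s) * (∫ s in (0:ℝ)..q, g s)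
        - (∫ s in (0:ℝ)..p, f s) * (∫ s in (0:ℝ)..p, g s) := by
  have h04 : (0:ℝ) ≤ 4 := by norm_num
  have hsub' : uIcc p q ⊆ uIcc (0:ℝ) 4 := by
    rw [uIcc_of_le hpq, uIcc_of_le h04]; exact hsub
  have hfpq : IntervalIntegrable f volume p q := hf.mono_set hsub'
  have hgpq : IntervalIntegrable g volume p q := hg.mono_set hsub'
  set F : ℝ → ℂ := fun t => ∫ s in (0:ℝ)..t, f s with hF
  set G : ℝ → ℂ := fun t => ∫ s in (0:ℝ)..t, g s with hG
  have hFcont : ContinuousOn F (Icc 0 4) := by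
    have := continuousOn_primitive_interval
      (f := f) (μ := volume) (a := 0) (b := 4)
      (by rw [← intervalIntegrable_iff']; exact hf)
    simpa [uIcc_of_le h04] using this
  have hGcont : ContinuousOn G (Icc 0 4) := by
    have := continuousOn_primitive_interval
      (f := g) (μ := volume) (a := 0) (b := 4)
      (by rw [← intervalIntegrable_iff']; exact hg)
    simpa [uIcc_of_le h04] using this
  have hFpq : ContinuousOn F (uIcc p q) := by
    rw [uIcc_of_le hpq]; exact hFcont.mono hsub
  have hGpq : ContinuousOn G (uIcc p q) := by
    rw [uIcc_of_le hpq]; exact hGcont.mono hsub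
  have hmeasf : ∀ t ∈ Ioo p q, StronglyMeasurableAtFilter f (𝓝 t) := by
    intro t ht
    exact ⟨Ioo p q, Ioo_mem_nhds ht.1 ht.2,
      (ContinuousOn.aestronglyMeasurable
        (fun s hs => (hfc s hs).continuousWithinAt) measurableSet_Ioo)⟩
  have hmeasg : ∀ t ∈ Ioo p q, StronglyMeasurableAtFilter g (𝓝 t) := by
    intro t ht
    exact ⟨Ioo p q, Ioo_mem_nhds ht.1 ht.2,
      (ContinuousOn.aestronglyMeasurable
        (fun s hs => (hgc s hs).continuousWithinAt) measurableSet_Ioo)⟩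
  have hderiv : ∀ t ∈ Ioo p q,
      HasDerivAt (fun t => F t * G t) (f t * G t + F t * g t) t := by
    intro t ht
    have htm : t ∈ Icc (0:ℝ) 4 := hsub ⟨ht.1.le, ht.2.le⟩
    have hf0t : IntervalIntegrable f volume 0 t := hf.mono_set
      (by rw [uIcc_of_le htm.1, uIcc_of_le h04]; exact Icc_subset_Icc_right htm.2)
    have hg0t : IntervalIntegrable g volume 0 t := hg.mono_set
      (by rw [uIcc_of_le htm.1, uIcc_of_le h04]; exact Icc_subset_Icc_right htm.2)
    have hFd : HasDerivAt F (f t) t :=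
      integral_hasDerivAt_right hf0t (hmeasf t ht) (hfc t ht)
    have hGd : HasDerivAt G (g t) t :=
      integral_hasDerivAt_right hg0t (hmeasg t ht) (hgc t ht)
    exact hFd.mul hGd
  have hint : IntervalIntegrable
      (fun t => f t * G t + F t * g t) volume p q :=
    (hfpq.mul_continuousOn hGpq).add (hgpq.continuousOn_mul hFpq)
  exact integral_eq_sub_of_hasDerivAt_of_le hpq
    ((hFpq.mono (by rw [uIcc_of_le hpq])).mul (hGpq.mono (by rw [uIcc_of_le hpq])))
    hderiv hint

private lemma CommAux.loop (a b h : ℝ → ℂ)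
    (ha : ContinuousOn a (Icc 0 1)) (hb : ContinuousOn b (Icc 0 1))
    (h1 : ∀ t ∈ Icc (0:ℝ) 1, h t = a t)
    (h2 : ∀ t ∈ Ioc (1:ℝ) 2, h t = b (t - 1))
    (h3 : ∀ t ∈ Ioc (2:ℝ) 3, h t = -a (3 - t))
    (h4 : ∀ t ∈ Ioc (3:ℝ) 4, h t = -b (4 - t)) :
    IntervalIntegrable h volume 0 4 ∧
    (∫ t in (0:ℝ)..4, h t) = 0 ∧
    (∀ t ∈ Ioo (0:ℝ) 1, ContinuousAt h t) ∧
    (∀ t ∈ Ioo (1:ℝ) 2, ContinuousAt h t) ∧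
    (∀ t ∈ Ioo (2:ℝ) 3, ContinuousAt h t) ∧
    (∀ t ∈ Ioo (3:ℝ) 4, ContinuousAt h t) := by
  have h1' : ∀ t ∈ Ioc (0:ℝ) 1, h t = a t := fun t ht => h1 t (Ioc_subset_Icc_self ht)
  have c2 : ContinuousOn (fun t => b (t - 1)) (Icc (1:ℝ) 2) := by
    apply hb.comp ((continuous_id.sub continuous_const).continuousOn)
    intro t ht
    obtain ⟨ht1, ht2⟩ := ht
    simp only [Set.mem_Icc, Pi.sub_apply, id_eq]
    constructor <;> linarith
  have c3 : ContinuousOn (fun t => -a (3 - t)) (Icc (2:ℝ) 3) := by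
    apply ContinuousOn.neg
    apply ha.comp ((continuous_const.sub continuous_id).continuousOn)
    intro t ht
    obtain ⟨ht1, ht2⟩ := ht
    simp only [Set.mem_Icc, Pi.sub_apply, id_eq]
    constructor <;> linarith
  have c4 : ContinuousOn (fun t => -b (4 - t)) (Icc (3:ℝ) 4) := by
    apply ContinuousOn.neg
    apply hb.comp ((continuous_const.sub continuous_id).continuousOn)
    intro t ht
    obtain ⟨ht1, ht2⟩ := ht
    simp only [Set.mem_Icc, Pi.sub_apply, id_eq]
    constructor <;> linarith
  have i1 : IntervalIntegrable h volume 0 1 := CommAux.pieceInt zero_le_one ha h1'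
  have i2 : IntervalIntegrable h volume 1 2 := CommAux.pieceInt one_le_two c2 h2
  have i3 : IntervalIntegrable h volume 2 3 := CommAux.pieceInt (by norm_num) c3 h3
  have i4 : IntervalIntegrable h volume 3 4 := CommAux.pieceInt (by norm_num) c4 h4
  refine ⟨((i1.trans i2).trans i3).trans i4, ?_, ?_, ?_, ?_, ?_⟩
  · have split : (∫ t in (0:ℝ)..1, h t) + (∫ t in (1:ℝ)..2, h t)
        + (∫ t in (2:ℝ)..3, h t) + (∫ t in (3:ℝ)..4, h t) = ∫ t in (0:ℝ)..4, h t := by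
      rw [integral_add_adjacent_intervals i1 i2,
        integral_add_adjacent_intervals (i1.trans i2) i3,
        integral_add_adjacent_intervals ((i1.trans i2).trans i3) i4]
    rw [← split]
    have e1 : (∫ t in (0:ℝ)..1, h t) = ∫ t in (0:ℝ)..1, a t :=
      CommAux.pieceEq zero_le_one h1'
    have e2 : (∫ t in (1:ℝ)..2, h t) = ∫ t in (0:ℝ)..1, b t := by
      rw [CommAux.pieceEq one_le_two h2, integral_comp_sub_right b 1]
      norm_num
    have e3 : (∫ t in (2:ℝ)..3, h t) = -∫ t in (0:ℝ)..1, a t := by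
      rw [CommAux.pieceEq (by norm_num) h3]
      have : (∫ t in (2:ℝ)..3, -a (3 - t)) = -∫ t in (2:ℝ)..3, a (3 - t) :=
        integral_neg
      rw [this, integral_comp_sub_left a 3]
      norm_num
    have e4 : (∫ t in (3:ℝ)..4, h t) = -∫ t in (0:ℝ)..1, b t := by
      rw [CommAux.pieceEq (by norm_num) h4]
      have : (∫ t in (3:ℝ)..4, -b (4 - t)) = -∫ t in (3:ℝ)..4, b (4 - t) :=
        integral_neg
      rw [this, integral_comp_sub_left b 4]
      norm_num
    rw [e1, e2, e3, e4]; ring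
  · exact fun t ht => CommAux.contAt ht ha h1'
  · exact fun t ht => CommAux.contAt ht c2 h2
  · exact fun t ht => CommAux.contAt ht c3 h3
  · exact fun t ht => CommAux.contAt ht c4 h4

private lemma CommAux.key (f g : ℝ → ℂ)
    (hf : IntervalIntegrable f volume 0 4) (hg : IntervalIntegrable g volume 0 4)
    (hf1 : ∀ t ∈ Ioo (0:ℝ) 1, ContinuousAt f t)
    (hf2 : ∀ t ∈ Ioo (1:ℝ) 2, ContinuousAt f t)
    (hf3 : ∀ t ∈ Ioo (2:ℝ) 3, ContinuousAt f t)
    (hf4 : ∀ t ∈ Ioo (3:ℝ) 4, ContinuousAt f t)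
    (hg1 : ∀ t ∈ Ioo (0:ℝ) 1, ContinuousAt g t)
    (hg2 : ∀ t ∈ Ioo (1:ℝ) 2, ContinuousAt g t)
    (hg3 : ∀ t ∈ Ioo (2:ℝ) 3, ContinuousAt g t)
    (hg4 : ∀ t ∈ Ioo (3:ℝ) 4, ContinuousAt g t) :
    (∫ t in (0:ℝ)..4, f t * ∫ s in (0:ℝ)..t, g s)
      + (∫ t in (0:ℝ)..4, (∫ s in (0:ℝ)..t, f s) * g t)
    = (∫ s in (0:ℝ)..4, f s) * (∫ s in (0:ℝ)..4, g s) := by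
  have h04 : (0:ℝ) ≤ 4 := by norm_num
  have hFc : ContinuousOn (fun t => ∫ s in (0:ℝ)..t, f s) (uIcc (0:ℝ) 4) :=
    continuousOn_primitive_interval (by rw [← intervalIntegrable_iff']; exact hf)
  have hGc : ContinuousOn (fun t => ∫ s in (0:ℝ)..t, g s) (uIcc (0:ℝ) 4) :=
    continuousOn_primitive_interval (by rw [← intervalIntegrable_iff']; exact hg)
  have hfG : IntervalIntegrable (fun t => f t * ∫ s in (0:ℝ)..t, g s) volume 0 4 :=
    hf.mul_continuousOn hGc
  have hFg : IntervalIntegrable (fun t => (∫ s in (0:ℝ)..t, f s) * g t) volume 0 4 :=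
    hg.continuousOn_mul hFc
  have sub : ∀ p q : ℝ, 0 ≤ p → q ≤ 4 → Icc p q ⊆ Icc (0:ℝ) 4 :=
    fun p q h0p hq4 => Icc_subset_Icc h0p hq4
  have P1 := CommAux.pieceFTC f g zero_le_one (sub 0 1 le_rfl (by norm_num)) hf hg hf1 hg1
  have P2 := CommAux.pieceFTC f g one_le_two (sub 1 2 zero_le_one (by norm_num)) hf hg hf2 hg2
  have P3 := CommAux.pieceFTC f g (by norm_num) (sub 2 3 (by norm_num) (by norm_num)) hf hg hf3 hg3
  have P4 := CommAux.pieceFTC f g (by norm_num) (sub 3 4 (by norm_num) le_rfl) hf hg hf4 hg4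
  have intsub : ∀ p q : ℝ, 0 ≤ p → p ≤ q → q ≤ 4 →
      IntervalIntegrable
        (fun t => f t * (∫ s in (0:ℝ)..t, g s) + (∫ s in (0:ℝ)..t, f s) * g t)
        volume p q := by
    intro p q h0p hpq hq4
    have hs : uIcc p q ⊆ uIcc (0:ℝ) 4 := by
      rw [uIcc_of_le hpq, uIcc_of_le h04]
      exact Icc_subset_Icc h0p hq4
    exact ((hf.mono_set hs).mul_continuousOn (hGc.mono hs)).add
      ((hg.mono_set hs).continuousOn_mul (hFc.mono hs))
  have split : (∫ t in (0:ℝ)..1, (f t * (∫ s in (0:ℝ)..t, g s) + (∫ s in (0:ℝ)..t, f s) * g t))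
      + (∫ t in (1:ℝ)..2, (f t * (∫ s in (0:ℝ)..t, g s) + (∫ s in (0:ℝ)..t, f s) * g t))
      + (∫ t in (2:ℝ)..3, (f t * (∫ s in (0:ℝ)..t, g s) + (∫ s in (0:ℝ)..t, f s) * g t))
      + (∫ t in (3:ℝ)..4, (f t * (∫ s in (0:ℝ)..t, g s) + (∫ s in (0:ℝ)..t, f s) * g t))
      = ∫ t in (0:ℝ)..4, (f t * (∫ s in (0:ℝ)..t, g s) + (∫ s in (0:ℝ)..t, f s) * g t) := by
    rw [integral_add_adjacent_intervals (intsub 0 1 le_rfl zero_le_one (by norm_num))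
        (intsub 1 2 zero_le_one one_le_two (by norm_num)),
      integral_add_adjacent_intervals (intsub 0 2 le_rfl (by norm_num) (by norm_num))
        (intsub 2 3 (by norm_num) (by norm_num) (by norm_num)),
      integral_add_adjacent_intervals (intsub 0 3 le_rfl (by norm_num) (by norm_num))
        (intsub 3 4 (by norm_num) (by norm_num) le_rfl)]
  have hF0 : (∫ s in (0:ℝ)..0, f s) = 0 := integral_same
  have hG0 : (∫ s in (0:ℝ)..0, g s) = 0 := integral_same
  have total : (∫ t in (0:ℝ)..4,
      (f t * (∫ s in (0:ℝ)..t, g s) + (∫ s in (0:ℝ)..t, f s) * g t))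
      = (∫ s in (0:ℝ)..4, f s) * (∫ s in (0:ℝ)..4, g s) := by
    rw [← split, P1, P2, P3, P4, hF0, hG0]; ring
  rw [← total, integral_add hfG hFg]

/-- Lemma 4.9: (a) the double iterated integral over a commutator loop
`[μ,τ] = μτμ⁻¹τ⁻¹` is antisymmetric in the two 1-forms; (b) the double
iterated integral of a 1-form with itself over a commutator loop vanishes.
Here `aᵢ`, `bᵢ` are the pullbacks of `ωᵢ` along `μ`, `τ`, and `hᵢ` is the
pullback along `[μ,τ]`, given piecewise on `[0,4]`. -/
theorem double_iterated_integral_commutator_antisymm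
    (a₁ b₁ a₂ b₂ h₁ h₂ : ℝ → ℂ)
    (ha₁ : ContinuousOn a₁ (Set.Icc 0 1)) (hb₁ : ContinuousOn b₁ (Set.Icc 0 1))
    (ha₂ : ContinuousOn a₂ (Set.Icc 0 1)) (hb₂ : ContinuousOn b₂ (Set.Icc 0 1))
    (h1a : ∀ t ∈ Set.Icc (0:ℝ) 1, h₁ t = a₁ t)
    (h1b : ∀ t ∈ Set.Ioc (1:ℝ) 2, h₁ t = b₁ (t - 1))
    (h1c : ∀ t ∈ Set.Ioc (2:ℝ) 3, h₁ t = -a₁ (3 - t))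
    (h1d : ∀ t ∈ Set.Ioc (3:ℝ) 4, h₁ t = -b₁ (4 - t))
    (h2a : ∀ t ∈ Set.Icc (0:ℝ) 1, h₂ t = a₂ t)
    (h2b : ∀ t ∈ Set.Ioc (1:ℝ) 2, h₂ t = b₂ (t - 1))
    (h2c : ∀ t ∈ Set.Ioc (2:ℝ) 3, h₂ t = -a₂ (3 - t))
    (h2d : ∀ t ∈ Set.Ioc (3:ℝ) 4, h₂ t = -b₂ (4 - t)) :
    ((∫ t in (0:ℝ)..4, ∫ s in (0:ℝ)..t, h₂ s * h₁ t)
        = -∫ t in (0:ℝ)..4, ∫ s in (0:ℝ)..t, h₁ s * h₂ t)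
    ∧ (∫ t in (0:ℝ)..4, ∫ s in (0:ℝ)..t, h₁ s * h₁ t) = 0 := by
  obtain ⟨i1, z1, c11, c12, c13, c14⟩ :=
    CommAux.loop a₁ b₁ h₁ ha₁ hb₁ h1a h1b h1c h1d
  obtain ⟨i2, z2, c21, c22, c23, c24⟩ :=
    CommAux.loop a₂ b₂ h₂ ha₂ hb₂ h2a h2b h2c h2d
  simp only [intervalIntegral.integral_mul_const]
  have K12 := CommAux.key h₁ h₂ i1 i2 c11 c12 c13 c14 c21 c22 c23 c24
  have K11 := CommAux.key h₁ h₁ i1 i1 c11 c12 c13 c14 c11 c12 c13 c14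
  rw [z1, zero_mul] at K12 K11
  constructor
  · have e : (∫ t in (0:ℝ)..4, (∫ s in (0:ℝ)..t, h₂ s) * h₁ t)
        = ∫ t in (0:ℝ)..4, h₁ t * ∫ s in (0:ℝ)..t, h₂ s :=
      integral_congr (fun t _ => mul_comm _ _)
    rw [e]
    exact eq_neg_of_add_eq_zero_left K12
  · have e : (∫ t in (0:ℝ)..4, (∫ s in (0:ℝ)..t, h₁ s) * h₁ t)
        = ∫ t in (0:ℝ)..4, h₁ t * ∫ s in (0:ℝ)..t, h₁ s :=
      integral_congr (fun t _ => mul_comm _ _)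
    rw [e] at K11 ⊢
    rw [← add_self_eq_zero]
    exact K11
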